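/- Let r ≥ 3, A ∈ 𝒯_r and let 𝔭 = (p_e)_{e∈E(A)} be A-admissible. Then U_A^𝔭 is an open, connected and simply connected subset of X_r, and the same holds for U_A = ⋃ U_A^𝔭 (union over all A-admissible 𝔭). -/

import Mathlib

noncomputable section

/-- A plane (rooted) binary tree with leaves labeled by elements of `Fin r`. -/
inductive PTree (r : ℕ) : Type
  | leaf : Fin r → PTree r
  | node : PTree r → PTree r → PTree r

namespace PTree

variable {r : ℕ}

/-- The labels of the leaves of the tree, listed from left to right. -/
def leafLabels : PTree r → List (Fin r)
  | .leaf i => [i]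
  | .node l t => l.leafLabels ++ t.leafLabels

/-- `A ∈ 𝒯_r`: the `r` leaves of `A` are labeled bijectively by `Fin r`. -/
def IsTree (A : PTree r) : Prop :=
  A.leafLabels.Nodup ∧ A.leafLabels.length = r

/-- The label of the rightmost leaf of the tree. -/
def rightmost : PTree r → Fin r
  | .leaf i => i
  | .node _ t => t.rightmost

/-- The subtree of a tree at the address `p` (`false` = go to the left child,
`true` = go to the right child), if the address is valid. -/
def subtreeAt : PTree r → List Bool → Option (PTree r)
  | t, [] => some t
  | .leaf _, _ :: _ => none
  | .node l t, b :: p => (if b then t else l).subtreeAt p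

/-- `p` is the address of an internal (non-leaf) vertex of `A`; the set of such
addresses is `V(A)`. -/
def IsVertex (A : PTree r) (p : List Bool) : Prop :=
  ∃ l t : PTree r, A.subtreeAt p = some (.node l t)

/-- `p` is the address of the lower endpoint `d(e)` of an internal edge `e` of
`A` (an edge not adjacent to a leaf); the upper endpoint `u(e)` is at the
address `p.dropLast`.  The set of such addresses is `E(A)`. -/
def IsEdge (A : PTree r) (p : List Bool) : Prop :=
  p ≠ [] ∧ A.IsVertex p

/-- The type `E(A)` of internal edges of `A`. -/
abbrev Edge (A : PTree r) : Type := {p : List Bool // A.IsEdge p}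

/-- `x_v = z_{L(v)} − z_{R(v)}` for the internal vertex `v` given as the
subtree rooted at it (junk value `0` at leaves). -/
def xval (z : Fin r → ℂ) : PTree r → ℂ
  | .leaf _ => 0
  | .node l t => z l.rightmost - z t.rightmost

/-- The coordinate `x_v` for the vertex `v` of `A` with address `p`. -/
def xAt (A : PTree r) (z : Fin r → ℂ) (p : List Bool) : ℂ :=
  match A.subtreeAt p with
  | some t => xval z t
  | none => 0

/-- The coordinate `ζ_e = x_{d(e)} / x_{u(e)}` for the edge of `A` whose lower
endpoint has address `p` (its upper endpoint has address `p.dropLast`). -/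
def zetaAt (A : PTree r) (z : Fin r → ℂ) (p : List Bool) : ℂ :=
  xAt A z p / xAt A z p.dropLast

/-- `Leaf(e)`: the labels of the leaves descending from the vertex of `A` with
address `p`. -/
def leavesAt (A : PTree r) (p : List Bool) : List (Fin r) :=
  ((A.subtreeAt p).map leafLabels).getD []

/-- The label of the rightmost leaf descending from the vertex of `A` with
address `p`. -/
def rightmostAt (A : PTree r) (p : List Bool) : Option (Fin r) :=
  (A.subtreeAt p).map rightmost

end PTree

/-- The configuration space `X_r = {(z_1,…,z_r) ∈ ℂ^r : z_i ≠ z_j for i ≠ j}`. -/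
def ConfigSpace (r : ℕ) : Set (Fin r → ℂ) :=
  {z | ∀ i j : Fin r, i ≠ j → z i ≠ z j}

namespace PTree

variable {r : ℕ}

/-- The `A`-coordinate map `Ψ_A = (z_A, x_A, (ζ_e)_{e ∈ E(A)})`, where
`z_A = z_{r_A}` (`r_A` the rightmost leaf of `A`) and `x_A = x_{t_A}` (`t_A`
the root of `A`). -/
def psi (A : PTree r) (z : Fin r → ℂ) : ℂ × ℂ × (A.Edge → ℂ) :=
  (z A.rightmost, xval z A, fun e => A.zetaAt z e.1)

/-- The variable index type for the polynomial ring
`ℂ[z_A, x_A, ζ_e (e ∈ E(A))]`. -/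
abbrev Idx (A : PTree r) : Type := Unit ⊕ Unit ⊕ A.Edge

/-- The point of `ℂ^{Idx A}` corresponding to `w = (z_A, x_A, (ζ_e)_e)`. -/
def assign (A : PTree r) (w : ℂ × ℂ × (A.Edge → ℂ)) : A.Idx → ℂ :=
  Sum.elim (fun _ => w.1) (Sum.elim (fun _ => w.2.1) fun e => w.2.2 e)

/-- The polynomial map `Φ_A : ℂ × ℂ × ℂ^{E(A)} → ℂ^r` determined by a family
of polynomials `P`. -/
def phiMap (A : PTree r) (P : Fin r → MvPolynomial A.Idx ℂ)
    (w : ℂ × ℂ × (A.Edge → ℂ)) : Fin r → ℂ :=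
  fun i => MvPolynomial.eval (A.assign w) (P i)

/-- `Φ_A ∘ Ψ_A = id` on `X_r`. -/
def PhiPsiId (A : PTree r) (P : Fin r → MvPolynomial A.Idx ℂ) : Prop :=
  ∀ z ∈ ConfigSpace r, A.phiMap P (A.psi z) = z

/-- `Ψ_A ∘ Φ_A = id` on `ℂ × ℂ^× × (ℂ^×)^{E(A)}`. -/
def PsiPhiId (A : PTree r) (P : Fin r → MvPolynomial A.Idx ℂ) : Prop :=
  ∀ w : ℂ × ℂ × (A.Edge → ℂ), w.2.1 ≠ 0 → (∀ e, w.2.2 e ≠ 0) →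
    A.psi (A.phiMap P w) = w

end PTree

/-- The cut plane `ℂ^cut = ℂ ∖ ℝ_{≤0}`. -/
def cutPlane : Set ℂ := {w : ℂ | 0 < w.re ∨ w.im ≠ 0}

namespace PTree

variable {r : ℕ}

/-- The region `ℂ × ℂ^cut × ∏_{e ∈ E(A)} 𝔻_{p_e}^cut` in `ℂ × ℂ × ℂ^{E(A)}`. -/
def cutRegion (A : PTree r) (p : A.Edge → ℝ) : Set (ℂ × ℂ × (A.Edge → ℂ)) :=
  {w | w.2.1 ∈ cutPlane ∧ ∀ e, w.2.2 e ∈ cutPlane ∧ ‖w.2.2 e‖ < p e}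

/-- The tuple `p = (p_e)_{e∈E(A)}` is `A`-admissible:
`Φ_A(ℂ × ℂ^× × ∏_e 𝔻_{p_e}^×) ⊆ X_r`. -/
def Admissible (A : PTree r) (P : Fin r → MvPolynomial A.Idx ℂ)
    (p : A.Edge → ℝ) : Prop :=
  ∀ w : ℂ × ℂ × (A.Edge → ℂ), w.2.1 ≠ 0 →
    (∀ e, w.2.2 e ≠ 0 ∧ ‖w.2.2 e‖ < p e) →
      A.phiMap P w ∈ ConfigSpace r

/-- `U_A^𝔭 = Φ_A(ℂ × ℂ^cut × ∏_e 𝔻_{p_e}^cut)`. -/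
def UAp (A : PTree r) (P : Fin r → MvPolynomial A.Idx ℂ) (p : A.Edge → ℝ) :
    Set (Fin r → ℂ) :=
  A.phiMap P '' A.cutRegion p

/-- `U_A = ⋃ U_A^𝔭`, the union over all `A`-admissible tuples of positive
reals `𝔭`. -/
def UA (A : PTree r) (P : Fin r → MvPolynomial A.Idx ℂ) : Set (Fin r → ℂ) :=
  ⋃ (p : A.Edge → ℝ) (_ : (∀ e, 0 < p e) ∧ A.Admissible P p), A.UAp P p

end PTree

namespace PTree

variable {r : ℕ}

/-- Size of the tree. -/
def sz : PTree r → ℕ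
  | .leaf _ => 1
  | .node l t => l.sz + t.sz + 1

theorem length_le_sz {A : PTree r} {q : List Bool} {t : PTree r}
    (h : A.subtreeAt q = some t) : q.length ≤ A.sz := by
  induction A generalizing q with
  | leaf i =>
    cases q with
    | nil => simp [sz]
    | cons b q => simp [subtreeAt] at h
  | node l s ihl ihs =>
    cases q with
    | nil => simp [sz]
    | cons b q =>
      simp only [subtreeAt] at h
      cases b with
      | false =>
        have := ihl (q := q) (by simpa using h)
        simp only [sz, List.length_cons]; omega
      | true =>
        have := ihs (q := q) (by simpa using h)
        simp only [sz, List.length_cons]; omega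

instance (A : PTree r) : Finite A.Edge := by
  have : {q : List Bool | A.IsEdge q} ⊆ {q : List Bool | q.length ≤ A.sz} := by
    rintro q ⟨-, l, t, h⟩
    exact length_le_sz h
  exact (Set.Finite.subset (List.finite_length_le Bool A.sz) this).to_subtype

theorem leafLabels_infix {A : PTree r} {q : List Bool} {t : PTree r}
    (h : A.subtreeAt q = some t) : t.leafLabels <:+: A.leafLabels := by
  induction A generalizing q with
  | leaf i =>
    cases q with
    | nil => simp [subtreeAt] at h; subst h; exact List.infix_rfl
    | cons b q => simp [subtreeAt] at h
  | node l s ihl ihs =>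
    cases q with
    | nil => simp [subtreeAt] at h; subst h; exact List.infix_rfl
    | cons b q =>
      simp only [subtreeAt] at h
      cases b with
      | false =>
        exact (ihl (by simpa using h)).trans
          ((List.prefix_append _ _).isInfix)
      | true =>
        exact (ihs (by simpa using h)).trans
          ((List.suffix_append _ _).isInfix)

theorem rightmost_mem (A : PTree r) : A.rightmost ∈ A.leafLabels := by
  induction A with
  | leaf i => simp [rightmost, leafLabels]
  | node l t ihl iht => simp [rightmost, leafLabels, iht]

theorem xval_ne_zero {z : Fin r → ℂ} (hz : z ∈ ConfigSpace r) {l t : PTree r}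
    (hnd : (PTree.node l t).leafLabels.Nodup) : xval z (.node l t) ≠ 0 := by
  have hmeml : l.rightmost ∈ l.leafLabels := rightmost_mem l
  have hmemt : t.rightmost ∈ t.leafLabels := rightmost_mem t
  have hne : l.rightmost ≠ t.rightmost := by
    simp only [leafLabels, List.nodup_append] at hnd
    intro h
    exact hnd.2.2 _ hmeml _ hmemt h
  have := hz l.rightmost t.rightmost hne
  simpa [xval, sub_eq_zero] using this

theorem xAt_ne_zero {A : PTree r} {z : Fin r → ℂ} (hz : z ∈ ConfigSpace r)
    (hnd : A.leafLabels.Nodup) {q : List Bool} (hq : A.IsVertex q) :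
    A.xAt z q ≠ 0 := by
  obtain ⟨l, t, h⟩ := hq
  have hinf := leafLabels_infix h
  have : (PTree.node l t).leafLabels.Nodup := (hinf.sublist).nodup hnd
  simp only [xAt, h]
  exact xval_ne_zero hz this

theorem subtreeAt_append (A : PTree r) (q q' : List Bool) :
    A.subtreeAt (q ++ q') = (A.subtreeAt q).bind (fun t => t.subtreeAt q') := by
  induction A generalizing q with
  | leaf i =>
    cases q with
    | nil => simp [subtreeAt]
    | cons b q => simp [subtreeAt]
  | node l s ihl ihs =>
    cases q with
    | nil => simp [subtreeAt]
    | cons b q =>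
      cases b with
      | false => simpa [subtreeAt] using ihl q
      | true => simpa [subtreeAt] using ihs q

theorem IsEdge.dropLast_isVertex {A : PTree r} {q : List Bool} (h : A.IsEdge q) :
    A.IsVertex q.dropLast := by
  obtain ⟨hne, l, t, h⟩ := h
  have hq : q = q.dropLast ++ [q.getLast hne] := (List.dropLast_append_getLast hne).symm
  rw [hq, subtreeAt_append] at h
  cases hd : A.subtreeAt q.dropLast with
  | none => rw [hd] at h; simp at h
  | some u =>
    rw [hd] at h
    simp only [Option.bind_some] at h
    cases u with
    | leaf i => simp [subtreeAt] at h
    | node a b => exact ⟨a, b, hd⟩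

end PTree

theorem isOpen_configSpace (r : ℕ) : IsOpen (ConfigSpace r) := by
  have h : ConfigSpace r =
      ⋂ q : {q : Fin r × Fin r // q.1 ≠ q.2}, {z | z q.1.1 ≠ z q.1.2} := by
    ext z
    simp only [ConfigSpace, Set.mem_setOf_eq, Set.mem_iInter, Subtype.forall]
    exact ⟨fun h q hq => h q.1 q.2 hq, fun h i j hij => h (i, j) hij⟩
  rw [h]
  exact isOpen_iInter_of_finite fun q =>
    isOpen_ne_fun (continuous_apply _) (continuous_apply _)

namespace PTree

variable {r : ℕ}

theorem continuous_assign (A : PTree r) : Continuous A.assign := by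
  apply continuous_pi; intro j
  rcases j with _ | _ | e
  · exact continuous_fst
  · exact continuous_snd.fst
  · exact (continuous_apply e).comp continuous_snd.snd

theorem continuous_phiMap (A : PTree r) (P : Fin r → MvPolynomial A.Idx ℂ) :
    Continuous (A.phiMap P) := by
  apply continuous_pi; intro i
  exact (MvPolynomial.continuous_eval (P i)).comp A.continuous_assign

theorem continuous_xval (t : PTree r) : Continuous fun z : Fin r → ℂ => xval z t := by
  cases t with
  | leaf i => exact continuous_const
  | node l s => exact (continuous_apply _).sub (continuous_apply _)

theorem continuous_xAt (A : PTree r) (q : List Bool) :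
    Continuous fun z : Fin r → ℂ => A.xAt z q := by
  unfold xAt
  cases h : A.subtreeAt q with
  | none => simp only [h]; exact continuous_const
  | some t => simp only [h]; exact continuous_xval t

theorem continuousOn_psi (A : PTree r) (hnd : A.leafLabels.Nodup) :
    ContinuousOn A.psi (ConfigSpace r) := by
  apply ContinuousOn.prodMk
  · exact (continuous_apply _).continuousOn
  apply ContinuousOn.prodMk
  · exact (continuous_xval A).continuousOn
  · rw [continuousOn_pi]
    intro e
    simp only [zetaAt]
    exact ContinuousOn.div (A.continuous_xAt e.1).continuousOn
      (A.continuous_xAt e.1.dropLast).continuousOn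
      fun z hz => xAt_ne_zero hz hnd e.2.dropLast_isVertex

end PTree

theorem isOpen_cutPlane : IsOpen cutPlane := by
  have h : cutPlane = {w : ℂ | 0 < w.re} ∪ {w : ℂ | w.im ≠ 0} := by
    ext w; simp [cutPlane]
  rw [h]
  exact (isOpen_lt continuous_const Complex.continuous_re).union
    (isOpen_ne_fun Complex.continuous_im continuous_const)

theorem cutPlane_ne_zero {w : ℂ} (h : w ∈ cutPlane) : w ≠ 0 := by
  rintro rfl; simp [cutPlane] at h

theorem cut_aux {c : ℝ} {w : ℂ} {a b : ℝ} (hc : 0 < c) (hw : w ∈ cutPlane)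
    (ha : 0 ≤ a) (hb : 0 ≤ b) (hab : a + b = 1) :
    a • (c : ℂ) + b • w ∈ cutPlane := by
  rcases eq_or_lt_of_le hb with hb0 | hb0
  · have ha1 : a = 1 := by linarith
    left
    simp only [ha1, ← hb0, one_smul, zero_smul, add_zero, Complex.ofReal_re]
    exact hc
  · rcases hw with hre | him
    · left
      simp only [Complex.add_re, Complex.smul_re, Complex.ofReal_re, smul_eq_mul]
      nlinarith [mul_nonneg ha hc.le, mul_pos hb0 hre]
    · right
      simp only [Complex.add_im, Complex.smul_im, Complex.ofReal_im, smul_eq_mul]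
      intro hcon
      have : b * w.im ≠ 0 := mul_ne_zero (ne_of_gt hb0) him
      exact this (by linarith [hcon])

theorem abs_aux {c ρ : ℝ} {w : ℂ} {a b : ℝ} (hc : 0 < c) (hcρ : c < ρ)
    (hwρ : ‖w‖ < ρ) (ha : 0 ≤ a) (hb : 0 ≤ b) (hab : a + b = 1) :
    ‖a • (c : ℂ) + b • w‖ < ρ := by
  have h1 : ‖a • (c : ℂ) + b • w‖ ≤ a * c + b * ‖w‖ := by
    refine le_trans (norm_add_le _ _) ?_
    simp only [Complex.real_smul, norm_mul, Complex.norm_real, Real.norm_eq_abs,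
      abs_of_nonneg ha, abs_of_nonneg hb, abs_of_pos hc, le_refl]
  rcases eq_or_lt_of_le hb with hb0 | hb0
  · have ha1 : a = 1 := by linarith
    rw [ha1, ← hb0, one_smul, zero_smul, add_zero]
    simpa [Complex.norm_real, abs_of_pos hc] using hcρ
  · have : a * c + b * ‖w‖ < ρ := by
      nlinarith [mul_le_mul_of_nonneg_left hcρ.le ha, mul_lt_mul_of_pos_left hwρ hb0]
    exact lt_of_le_of_lt h1 this

namespace PTree

variable {r : ℕ}

/-- The star center of `cutRegion p`. -/
def ctr (A : PTree r) (p : A.Edge → ℝ) : ℂ × ℂ × (A.Edge → ℂ) :=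
  (0, 1, fun e => ((p e / 2 : ℝ) : ℂ))

theorem ctr_mem (A : PTree r) (p : A.Edge → ℝ) (hp : ∀ e, 0 < p e) :
    A.ctr p ∈ A.cutRegion p := by
  refine ⟨Or.inl (by simp [ctr]), fun e => ⟨Or.inl ?_, ?_⟩⟩
  · simp only [ctr]
    simpa using half_pos (hp e)
  · simp only [ctr, Complex.norm_real, Real.norm_eq_abs, abs_of_pos (half_pos (hp e))]
    exact half_lt_self (hp e)

theorem starConvex_cutRegion (A : PTree r) (p : A.Edge → ℝ) (hp : ∀ e, 0 < p e) :
    StarConvex ℝ (A.ctr p) (A.cutRegion p) := by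
  intro w hw a b ha hb hab
  obtain ⟨hw1, hw2⟩ := hw
  refine ⟨?_, fun e => ⟨?_, ?_⟩⟩
  · have : (a • A.ctr p + b • w).2.1 = a • ((1:ℝ) : ℂ) + b • w.2.1 := by
      simp [ctr, Prod.smul_def]
    rw [this]
    exact cut_aux one_pos hw1 ha hb hab
  · have h2 : (a • A.ctr p + b • w).2.2 e = a • ((p e / 2 : ℝ) : ℂ) + b • w.2.2 e := by
      simp [ctr, Prod.smul_def]
    rw [h2]
    exact cut_aux (half_pos (hp e)) (hw2 e).1 ha hb hab
  · have h2 : (a • A.ctr p + b • w).2.2 e = a • ((p e / 2 : ℝ) : ℂ) + b • w.2.2 e := by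
      simp [ctr, Prod.smul_def]
    rw [h2]
    exact abs_aux (half_pos (hp e)) (half_lt_self (hp e)) (hw2 e).2 ha hb hab

theorem isOpen_cutRegion (A : PTree r) (p : A.Edge → ℝ) : IsOpen (A.cutRegion p) := by
  have h : A.cutRegion p = {w : ℂ × ℂ × (A.Edge → ℂ) | w.2.1 ∈ cutPlane} ∩
      ⋂ e, {w : ℂ × ℂ × (A.Edge → ℂ) |
        w.2.2 e ∈ cutPlane ∧ ‖w.2.2 e‖ < p e} := by
    ext w
    simp only [cutRegion, Set.mem_setOf_eq, Set.mem_inter_iff, Set.mem_iInter]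
  rw [h]
  apply IsOpen.inter
  · exact isOpen_cutPlane.preimage continuous_snd.fst
  · apply isOpen_iInter_of_finite
    intro e
    have ho : IsOpen {x : ℂ | x ∈ cutPlane ∧ ‖x‖ < p e} :=
      isOpen_cutPlane.inter (isOpen_lt continuous_norm continuous_const)
    exact ho.preimage
      ((continuous_apply e : Continuous fun g : A.Edge → ℂ => g e).comp
        continuous_snd.snd)

theorem cutRegion_nonzero {A : PTree r} {p : A.Edge → ℝ}
    {w : ℂ × ℂ × (A.Edge → ℂ)} (hw : w ∈ A.cutRegion p) :
    w.2.1 ≠ 0 ∧ ∀ e, w.2.2 e ≠ 0 :=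
  ⟨cutPlane_ne_zero hw.1, fun e => cutPlane_ne_zero (hw.2 e).1⟩

theorem UAp_eq (A : PTree r) (P : Fin r → MvPolynomial A.Idx ℂ) (p : A.Edge → ℝ)
    (hPhiPsi : A.PhiPsiId P) (hPsiPhi : A.PsiPhiId P) (hadm : A.Admissible P p) :
    A.UAp P p = ConfigSpace r ∩ A.psi ⁻¹' A.cutRegion p := by
  ext z
  constructor
  · rintro ⟨w, hw, rfl⟩
    obtain ⟨h1, h2⟩ := cutRegion_nonzero hw
    have hX : A.phiMap P w ∈ ConfigSpace r :=
      hadm w h1 fun e => ⟨h2 e, (hw.2 e).2⟩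
    refine ⟨hX, ?_⟩
    simp only [Set.mem_preimage, hPsiPhi w h1 h2]
    exact hw
  · rintro ⟨hX, hw⟩
    exact ⟨A.psi z, hw, hPhiPsi z hX⟩

theorem isOpen_UAp (A : PTree r) (P : Fin r → MvPolynomial A.Idx ℂ) (p : A.Edge → ℝ)
    (hnd : A.leafLabels.Nodup)
    (hPhiPsi : A.PhiPsiId P) (hPsiPhi : A.PsiPhiId P) (hadm : A.Admissible P p) :
    IsOpen (A.UAp P p) := by
  rw [UAp_eq A P p hPhiPsi hPsiPhi hadm]
  exact (A.continuousOn_psi hnd).isOpen_inter_preimage (isOpen_configSpace r)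
    (A.isOpen_cutRegion p)

end PTree

namespace PTree

variable {r : ℕ}

theorem image_subset_config {A : PTree r} {P : Fin r → MvPolynomial A.Idx ℂ}
    {S : Set (ℂ × ℂ × (A.Edge → ℂ))}
    (hX : ∀ w ∈ S, A.phiMap P w ∈ ConfigSpace r) :
    A.phiMap P '' S ⊆ ConfigSpace r := by
  rintro _ ⟨w, hw, rfl⟩; exact hX w hw

/-- `Φ_A` restricts to a homeomorphism from `S` onto `Φ_A(S)`. -/
theorem homeo_image (A : PTree r) (P : Fin r → MvPolynomial A.Idx ℂ)
    (hPhiPsi : A.PhiPsiId P) (hPsiPhi : A.PsiPhiId P)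
    (S : Set (ℂ × ℂ × (A.Edge → ℂ)))
    (hnz : ∀ w ∈ S, w.2.1 ≠ 0 ∧ ∀ e, w.2.2 e ≠ 0)
    (hX : ∀ w ∈ S, A.phiMap P w ∈ ConfigSpace r) (hnd : A.leafLabels.Nodup) :
    Nonempty (S ≃ₜ (A.phiMap P '' S)) := by
  have himg : A.phiMap P '' S ⊆ ConfigSpace r := image_subset_config hX
  have hpsiS : ∀ z : A.phiMap P '' S, A.psi z.1 ∈ S := by
    rintro ⟨z, hz⟩
    obtain ⟨w, hw, rfl⟩ := hz
    rw [hPsiPhi w (hnz w hw).1 (hnz w hw).2]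
    exact hw
  refine ⟨{
    toFun := fun w => ⟨A.phiMap P w.1, Set.mem_image_of_mem _ w.2⟩
    invFun := fun z => ⟨A.psi z.1, hpsiS z⟩
    left_inv := ?_
    right_inv := ?_
    continuous_toFun := ((A.continuous_phiMap P).comp continuous_subtype_val).subtype_mk _
    continuous_invFun := (((A.continuousOn_psi hnd).mono himg).restrict).subtype_mk _ }⟩
  · rintro ⟨w, hw⟩
    exact Subtype.ext (hPsiPhi w (hnz w hw).1 (hnz w hw).2)
  · rintro ⟨z, hz⟩
    obtain ⟨w, hw, rfl⟩ := hz
    exact Subtype.ext (hPhiPsi _ (hX w hw))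

/-- The main topological properties of `Φ_A(S)`, transferred from `S`. -/
theorem props_of_image (A : PTree r) (P : Fin r → MvPolynomial A.Idx ℂ)
    (hPhiPsi : A.PhiPsiId P) (hPsiPhi : A.PsiPhiId P)
    (S : Set (ℂ × ℂ × (A.Edge → ℂ)))
    (hnz : ∀ w ∈ S, w.2.1 ≠ 0 ∧ ∀ e, w.2.2 e ≠ 0)
    (hX : ∀ w ∈ S, A.phiMap P w ∈ ConfigSpace r) (hnd : A.leafLabels.Nodup)
    (hc : ContractibleSpace S) :
    IsConnected (A.phiMap P '' S) ∧ SimplyConnectedSpace (A.phiMap P '' S) := by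
  obtain ⟨e⟩ := A.homeo_image P hPhiPsi hPsiPhi S hnz hX hnd
  have hcI : ContractibleSpace (A.phiMap P '' S) := e.symm.contractibleSpace
  have hsc : SimplyConnectedSpace (A.phiMap P '' S) := inferInstance
  have hpc : PathConnectedSpace (A.phiMap P '' S) := inferInstance
  have hconn : ConnectedSpace (A.phiMap P '' S) := inferInstance
  exact ⟨isConnected_iff_connectedSpace.mpr hconn, hsc⟩

end PTree

theorem cutPlane_smul {c : ℝ} (hc : 0 < c) {w : ℂ} (hw : w ∈ cutPlane) :
    (c : ℂ) * w ∈ cutPlane := by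
  rcases hw with h | h
  · left
    simp only [Complex.mul_re, Complex.ofReal_re, Complex.ofReal_im, zero_mul, sub_zero]
    exact mul_pos hc h
  · right
    simp only [Complex.mul_im, Complex.ofReal_re, Complex.ofReal_im, zero_mul, add_zero]
    exact mul_ne_zero hc.ne' h

namespace PTree

variable {r : ℕ}

/-- Scaling all `ζ`-coordinates by factors in `(0,1]` preserves `cutRegion`. -/
theorem scale_mem {A : PTree r} {p' : A.Edge → ℝ} {w : ℂ × ℂ × (A.Edge → ℂ)}
    (hw : w ∈ A.cutRegion p') {c : A.Edge → ℝ}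
    (hc0 : ∀ e, 0 < c e) (hc1 : ∀ e, c e ≤ 1) :
    (w.1, w.2.1, fun e => ((c e : ℝ) : ℂ) * w.2.2 e) ∈ A.cutRegion p' := by
  refine ⟨hw.1, fun e => ⟨cutPlane_smul (hc0 e) (hw.2 e).1, ?_⟩⟩
  simp only [norm_mul, Complex.norm_real, Real.norm_eq_abs, abs_of_pos (hc0 e)]
  calc c e * ‖w.2.2 e‖ ≤ 1 * ‖w.2.2 e‖ :=
        mul_le_mul_of_nonneg_right (hc1 e) (norm_nonneg _)
    _ = ‖w.2.2 e‖ := one_mul _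
    _ < p' e := (hw.2 e).2

/-- The shrinking factor. -/
def mfac (A : PTree r) (p : A.Edge → ℝ) (w : ℂ × ℂ × (A.Edge → ℂ)) (e : A.Edge) : ℝ :=
  min 1 (p e / (2 * ‖w.2.2 e‖))

theorem mfac_pos {A : PTree r} {p : A.Edge → ℝ} {w : ℂ × ℂ × (A.Edge → ℂ)} {e : A.Edge}
    (hpe : 0 < p e) (hz : w.2.2 e ≠ 0) : 0 < A.mfac p w e :=
  lt_min one_pos (div_pos hpe (mul_pos two_pos (norm_pos_iff.mpr hz)))

theorem mfac_le_one (A : PTree r) (p : A.Edge → ℝ) (w : ℂ × ℂ × (A.Edge → ℂ)) (e : A.Edge) :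
    A.mfac p w e ≤ 1 := min_le_left _ _

theorem mfac_mul_abs_le {A : PTree r} {p : A.Edge → ℝ} {w : ℂ × ℂ × (A.Edge → ℂ)}
    {e : A.Edge} (hz : w.2.2 e ≠ 0) :
    A.mfac p w e * ‖w.2.2 e‖ ≤ p e / 2 := by
  have habs : (0:ℝ) < ‖w.2.2 e‖ := norm_pos_iff.mpr hz
  calc A.mfac p w e * ‖w.2.2 e‖
      ≤ (p e / (2 * ‖w.2.2 e‖)) * ‖w.2.2 e‖ :=
        mul_le_mul_of_nonneg_right (min_le_right _ _) habs.le
    _ = p e / 2 := by field_simp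

/-- The shrinking map. -/
def gmap (A : PTree r) (p : A.Edge → ℝ) (w : ℂ × ℂ × (A.Edge → ℂ)) :
    ℂ × ℂ × (A.Edge → ℂ) :=
  (w.1, w.2.1, fun e => ((A.mfac p w e : ℝ) : ℂ) * w.2.2 e)

theorem gmap_mem_self {A : PTree r} {p p' : A.Edge → ℝ} {w : ℂ × ℂ × (A.Edge → ℂ)}
    (hp : ∀ e, 0 < p e) (hw : w ∈ A.cutRegion p') : A.gmap p w ∈ A.cutRegion p' :=
  scale_mem hw (fun e => mfac_pos (hp e) (cutPlane_ne_zero (hw.2 e).1))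
    (fun e => A.mfac_le_one p w e)

theorem gmap_mem_target {A : PTree r} {p p' : A.Edge → ℝ} {w : ℂ × ℂ × (A.Edge → ℂ)}
    (hp : ∀ e, 0 < p e) (hw : w ∈ A.cutRegion p') : A.gmap p w ∈ A.cutRegion p := by
  refine ⟨hw.1, fun e => ⟨?_, ?_⟩⟩
  · exact cutPlane_smul (mfac_pos (hp e) (cutPlane_ne_zero (hw.2 e).1)) (hw.2 e).1
  · have hz := cutPlane_ne_zero (hw.2 e).1
    have hm := mfac_pos (hp e) hz (A := A)
    calc ‖((A.mfac p w e : ℝ) : ℂ) * w.2.2 e‖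
        = A.mfac p w e * ‖w.2.2 e‖ := by
          simp [norm_mul, Complex.norm_real, abs_of_pos hm]
      _ ≤ p e / 2 := mfac_mul_abs_le hz
      _ < p e := half_lt_self (hp e)

/-- `R = ⋃_{𝔭 admissible} cutRegion 𝔭`, so that `U_A = Φ_A(R)`. -/
def bigRegion (A : PTree r) (P : Fin r → MvPolynomial A.Idx ℂ) :
    Set (ℂ × ℂ × (A.Edge → ℂ)) :=
  ⋃ (p : A.Edge → ℝ) (_ : (∀ e, 0 < p e) ∧ A.Admissible P p), A.cutRegion p

theorem UA_eq_image (A : PTree r) (P : Fin r → MvPolynomial A.Idx ℂ) :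
    A.UA P = A.phiMap P '' A.bigRegion P := by
  simp only [UA, UAp, bigRegion, Set.image_iUnion]

end PTree

theorem coeff_pos {t m : ℝ} (ht0 : 0 ≤ t) (ht1 : t ≤ 1) (hm0 : 0 < m) (hm1 : m ≤ 1) :
    0 < 1 - t + t * m := by nlinarith

theorem coeff_le_one {t m : ℝ} (ht0 : 0 ≤ t) (hm1 : m ≤ 1) : 1 - t + t * m ≤ 1 := by
  nlinarith

namespace PTree

variable {r : ℕ}

theorem continuous_zeta (A : PTree r) (e : A.Edge) :
    Continuous fun w : ℂ × ℂ × (A.Edge → ℂ) => w.2.2 e :=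
  (continuous_apply e : Continuous fun g : A.Edge → ℂ => g e).comp continuous_snd.snd

theorem bigRegion_spec {A : PTree r} {P : Fin r → MvPolynomial A.Idx ℂ}
    {w : ℂ × ℂ × (A.Edge → ℂ)} (hw : w ∈ A.bigRegion P) :
    ∃ p', ((∀ e, 0 < p' e) ∧ A.Admissible P p') ∧ w ∈ A.cutRegion p' := by
  simpa [bigRegion, Set.mem_iUnion] using hw

theorem contractibleSpace_bigRegion (A : PTree r) (P : Fin r → MvPolynomial A.Idx ℂ)
    (p : A.Edge → ℝ) (hp : ∀ e, 0 < p e) (hadm : A.Admissible P p) :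
    ContractibleSpace (A.bigRegion P) := by
  set R := A.bigRegion P with hR
  have hsub : A.cutRegion p ⊆ R := fun w hw => Set.mem_iUnion₂.mpr ⟨p, ⟨hp, hadm⟩, hw⟩
  have hctr : A.ctr p ∈ R := hsub (A.ctr_mem p hp)
  have habsne : ∀ (w : R) (e : A.Edge), w.1.2.2 e ≠ 0 := by
    intro w e
    obtain ⟨p', hp', hw⟩ := bigRegion_spec w.2
    exact cutPlane_ne_zero (hw.2 e).1
  have hmcont : ∀ e : A.Edge, Continuous fun w : R => A.mfac p w.1 e := by
    intro e
    refine continuous_const.min (Continuous.div continuous_const ?_ ?_)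
    · exact continuous_const.mul
        (continuous_norm.comp ((A.continuous_zeta e).comp continuous_subtype_val))
    · intro w
      exact mul_ne_zero two_ne_zero (norm_ne_zero_iff.mpr (habsne w e))
  have hGmemR : ∀ w : R, A.gmap p w.1 ∈ R := by
    intro w
    obtain ⟨p', hp', hw⟩ := bigRegion_spec w.2
    exact Set.mem_iUnion₂.mpr ⟨p', hp', gmap_mem_self hp hw⟩
  have hGmemp : ∀ w : R, A.gmap p w.1 ∈ A.cutRegion p := by
    intro w
    obtain ⟨p', hp', hw⟩ := bigRegion_spec w.2
    exact gmap_mem_target hp hw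
  have hGcont : Continuous fun w : R => A.gmap p w.1 := by
    refine (continuous_subtype_val.fst).prodMk
      ((continuous_subtype_val.snd.fst).prodMk (continuous_pi fun e => ?_))
    exact (Complex.continuous_ofReal.comp (hmcont e)).mul
      ((A.continuous_zeta e).comp continuous_subtype_val)
  let Gc : C(R, R) := ⟨fun w => ⟨A.gmap p w.1, hGmemR w⟩, hGcont.subtype_mk _⟩
  have h1 : (ContinuousMap.id R).Homotopy Gc :=
    { toFun := fun q =>
        ⟨(q.2.1.1, q.2.1.2.1, fun e =>
            ((1 - (q.1 : ℝ) + (q.1 : ℝ) * A.mfac p q.2.1 e : ℝ) : ℂ) * q.2.1.2.2 e), by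
          obtain ⟨p', hp', hw⟩ := bigRegion_spec q.2.2
          refine Set.mem_iUnion₂.mpr ⟨p', hp', scale_mem hw (fun e => ?_) (fun e => ?_)⟩
          · exact coeff_pos q.1.2.1 q.1.2.2
              (mfac_pos (hp e) (cutPlane_ne_zero (hw.2 e).1)) (A.mfac_le_one p _ e)
          · exact coeff_le_one q.1.2.1 (A.mfac_le_one p _ e)⟩
      continuous_toFun := by
        apply Continuous.subtype_mk
        have hval : Continuous fun q : ↑unitInterval × R => (q.2 : ℂ × ℂ × (A.Edge → ℂ)) :=
          continuous_subtype_val.comp continuous_snd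
        have ht : Continuous fun q : ↑unitInterval × R => (q.1 : ℝ) :=
          continuous_subtype_val.comp continuous_fst
        refine hval.fst.prodMk (hval.snd.fst.prodMk (continuous_pi fun e => ?_))
        refine Continuous.mul ?_ ((A.continuous_zeta e).comp hval)
        exact Complex.continuous_ofReal.comp
          ((continuous_const.sub ht).add (ht.mul ((hmcont e).comp continuous_snd)))
      map_zero_left := by
        intro w
        apply Subtype.ext
        simp
      map_one_left := by
        intro w
        apply Subtype.ext
        simp [Gc, gmap] }
  have h2 : Gc.Homotopy (ContinuousMap.const R ⟨A.ctr p, hctr⟩) :=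
    { toFun := fun q =>
        ⟨(q.1 : ℝ) • A.ctr p + (1 - (q.1 : ℝ)) • A.gmap p q.2.1, by
          refine hsub (A.starConvex_cutRegion p hp (hGmemp q.2) q.1.2.1 ?_ (by ring))
          linarith [q.1.2.2]⟩
      continuous_toFun := by
        apply Continuous.subtype_mk
        have ht : Continuous fun q : ↑unitInterval × R => (q.1 : ℝ) :=
          continuous_subtype_val.comp continuous_fst
        exact (ht.smul continuous_const).add
          ((continuous_const.sub ht).smul (hGcont.comp continuous_snd))
      map_zero_left := by
        intro w
        apply Subtype.ext
        simp [Gc]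
      map_one_left := by
        intro w
        apply Subtype.ext
        simp }
  rw [contractible_iff_id_nullhomotopic]
  exact ⟨⟨A.ctr p, hctr⟩, ⟨h1.trans h2⟩⟩

end PTree

/-- Let `r ≥ 3`, `A ∈ 𝒯_r`, let `Φ_A` be the polynomial map inverting `Ψ_A`,
and let `𝔭 = (p_e)_{e∈E(A)}` be an `A`-admissible tuple of positive reals.
Then `U_A^𝔭` is an open, connected and simply connected subset of `X_r`, and
the same holds for `U_A = ⋃ U_A^𝔭` (union over all `A`-admissible tuples). -/
theorem stmt_12 {r : ℕ} (hr : 3 ≤ r) (A : PTree r) (hA : A.IsTree)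
    (P : Fin r → MvPolynomial A.Idx ℂ)
    (hPhiPsi : A.PhiPsiId P) (hPsiPhi : A.PsiPhiId P)
    (p : A.Edge → ℝ) (hp : ∀ e, 0 < p e) (hadm : A.Admissible P p) :
    (IsOpen (A.UAp P p) ∧ IsConnected (A.UAp P p) ∧
      SimplyConnectedSpace (A.UAp P p) ∧ A.UAp P p ⊆ ConfigSpace r) ∧
    (IsOpen (A.UA P) ∧ IsConnected (A.UA P) ∧
      SimplyConnectedSpace (A.UA P) ∧ A.UA P ⊆ ConfigSpace r) := by
  have hnd := hA.1
  -- part 1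
  have hnz1 : ∀ w ∈ A.cutRegion p, w.2.1 ≠ 0 ∧ ∀ e, w.2.2 e ≠ 0 :=
    fun w hw => PTree.cutRegion_nonzero hw
  have hX1 : ∀ w ∈ A.cutRegion p, A.phiMap P w ∈ ConfigSpace r := by
    intro w hw
    obtain ⟨h1, h2⟩ := PTree.cutRegion_nonzero hw
    exact hadm w h1 fun e => ⟨h2 e, (hw.2 e).2⟩
  have hc1 : ContractibleSpace (A.cutRegion p) :=
    (A.starConvex_cutRegion p hp).contractibleSpace ⟨A.ctr p, A.ctr_mem p hp⟩
  have hprops1 := A.props_of_image P hPhiPsi hPsiPhi (A.cutRegion p) hnz1 hX1 hnd hc1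
  -- part 2
  have hnz2 : ∀ w ∈ A.bigRegion P, w.2.1 ≠ 0 ∧ ∀ e, w.2.2 e ≠ 0 := by
    intro w hw
    obtain ⟨p', hp', hw'⟩ := PTree.bigRegion_spec hw
    exact PTree.cutRegion_nonzero hw'
  have hX2 : ∀ w ∈ A.bigRegion P, A.phiMap P w ∈ ConfigSpace r := by
    intro w hw
    obtain ⟨p', hp', hw'⟩ := PTree.bigRegion_spec hw
    obtain ⟨h1, h2⟩ := PTree.cutRegion_nonzero hw'
    exact hp'.2 w h1 fun e => ⟨h2 e, (hw'.2 e).2⟩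
  have hc2 : ContractibleSpace (A.bigRegion P) :=
    A.contractibleSpace_bigRegion P p hp hadm
  have hprops2 := A.props_of_image P hPhiPsi hPsiPhi (A.bigRegion P) hnz2 hX2 hnd hc2
  rw [A.UA_eq_image P] at *
  refine ⟨⟨A.isOpen_UAp P p hnd hPhiPsi hPsiPhi hadm, hprops1.1, hprops1.2,
      PTree.image_subset_config hX1⟩,
    ⟨?_, hprops2.1, hprops2.2, PTree.image_subset_config hX2⟩⟩
  · rw [← A.UA_eq_image P]
    exact isOpen_iUnion fun p' => isOpen_iUnion fun hp' =>
      A.isOpen_UAp P p' hnd hPhiPsi hPsiPhi hp'.2
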